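/- Let x be a CE fixed point for λ ∈ (0,1). Then x is twice continuously differentiable on [0,∞) and satisfies x''(t) − (1 − λ)x'(t) + λ(ψ(x(t)) − x(t)) = 0 for all t ≥ 0. -/

import Mathlib

open MeasureTheory

/-- Generating function ψ(x) = Σ_{k≥0} P(k) x^k. -/
noncomputable def genFun (P : ℕ → ℝ) (x : ℝ) : ℝ := ∑' k : ℕ, P k * x ^ k

/-- Context: P is a probability distribution on ℕ with mean d ∈ (1,∞), and ρ ∈ [0,1)
is the smallest fixed point of its generating function on [0,1]. -/
structure CEContext (P : ℕ → ℝ) (d ρ : ℝ) : Prop where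
  P_nonneg : ∀ k, 0 ≤ P k
  P_sum_one : ∑' k : ℕ, P k = 1
  mean_summable : Summable (fun k : ℕ => (k : ℝ) * P k)
  mean_eq : ∑' k : ℕ, (k : ℝ) * P k = d
  d_gt_one : 1 < d
  rho_nonneg : 0 ≤ ρ
  rho_lt_one : ρ < 1
  rho_fixed : genFun P ρ = ρ
  rho_least : ∀ y : ℝ, 0 ≤ y → y ≤ 1 → genFun P y = y → ρ ≤ y

/-- A CE fixed point for infection rate λ ∈ (0,1): x : [0,∞) → [0,1] non-increasing,
x(0) = 1, x(t) → ρ, and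
x(t) = e^{−λt} + λ e^{−λt} ∫₀ᵗ e^{(λ+1)u} (∫_u^∞ ψ(x(s)) e^{−s} ds) du. -/
def IsCEFixedPoint (P : ℕ → ℝ) (ρ lam : ℝ) (x : ℝ → ℝ) : Prop :=
  (∀ t, 0 ≤ t → x t ∈ Set.Icc (0 : ℝ) 1) ∧
  AntitoneOn x (Set.Ici 0) ∧
  x 0 = 1 ∧
  Filter.Tendsto x Filter.atTop (nhds ρ) ∧
  (∀ t, 0 ≤ t →
    x t = Real.exp (-(lam * t)) + lam * Real.exp (-(lam * t)) *
      ∫ u in (0:ℝ)..t, Real.exp ((lam + 1) * u) *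
        ∫ s in Set.Ioi u, genFun P (x s) * Real.exp (-s))

section Aux

variable {P : ℕ → ℝ}

lemma genFun_summable (hP : ∀ k, 0 ≤ P k) (hsum : Summable P) {a : ℝ} (ha : 0 ≤ a)
    (ha1 : a ≤ 1) : Summable (fun k : ℕ => P k * a ^ k) := by
  refine hsum.of_nonneg_of_le (fun k => mul_nonneg (hP k) (pow_nonneg ha k)) fun k => ?_
  calc P k * a ^ k ≤ P k * 1 := by
        refine mul_le_mul_of_nonneg_left ?_ (hP k)
        exact pow_le_one₀ ha ha1
    _ = P k := mul_one _

lemma genFun_mono (hP : ∀ k, 0 ≤ P k) (hsum : Summable P) {a b : ℝ} (ha : 0 ≤ a)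
    (hab : a ≤ b) (hb : b ≤ 1) : genFun P a ≤ genFun P b := by
  refine Summable.tsum_le_tsum (fun k => ?_) (genFun_summable hP hsum ha (hab.trans hb))
    (genFun_summable hP hsum (ha.trans hab) hb)
  exact mul_le_mul_of_nonneg_left (pow_le_pow_left₀ ha hab k) (hP k)

lemma genFun_one (hone : ∑' k : ℕ, P k = 1) : genFun P 1 = 1 := by
  simp [genFun, hone]

lemma genFun_mem (hP : ∀ k, 0 ≤ P k) (hsum : Summable P) (hone : ∑' k : ℕ, P k = 1)
    {a : ℝ} (ha : a ∈ Set.Icc (0:ℝ) 1) : genFun P a ∈ Set.Icc (0:ℝ) 1 := by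
  constructor
  · exact tsum_nonneg fun k => mul_nonneg (hP k) (pow_nonneg ha.1 k)
  · have := genFun_mono hP hsum ha.1 ha.2 le_rfl
    rwa [genFun_one hone] at this

lemma genFun_contOn (hP : ∀ k, 0 ≤ P k) (hsum : Summable P) :
    ContinuousOn (genFun P) (Set.Icc (0:ℝ) 1) := by
  refine continuousOn_tsum (fun k => (continuous_const.mul (continuous_pow k)).continuousOn)
    hsum fun k a ha => ?_
  rw [Real.norm_eq_abs, abs_of_nonneg (mul_nonneg (hP k) (pow_nonneg ha.1 k))]
  calc P k * a ^ k ≤ P k * 1 :=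
        mul_le_mul_of_nonneg_left (pow_le_one₀ ha.1 ha.2) (hP k)
    _ = P k := mul_one _

end Aux

/-- a CE fixed point is twice continuously differentiable on [0,∞)
and satisfies x'' − (1−λ)x' + λ(ψ(x) − x) = 0 there. -/
theorem ce_fixed_point_regularity {P : ℕ → ℝ} {d ρ : ℝ} (hctx : CEContext P d ρ)
    {lam : ℝ} (hlam0 : 0 < lam) (hlam1 : lam < 1)
    {x : ℝ → ℝ} (hx : IsCEFixedPoint P ρ lam x) :
    ContDiffOn ℝ 2 x (Set.Ici 0) ∧
    ∀ t, 0 ≤ t →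
      derivWithin (derivWithin x (Set.Ici 0)) (Set.Ici 0) t
        - (1 - lam) * derivWithin x (Set.Ici 0) t
        + lam * (genFun P (x t) - x t) = 0 := by
  obtain ⟨hx01, hxanti, hx0, _hxlim, hxeq⟩ := hx
  have hsum : Summable P := by
    by_contra h
    have h1 := hctx.P_sum_one
    rw [tsum_eq_zero_of_not_summable h] at h1
    norm_num at h1
  have hP := hctx.P_nonneg
  have hone := hctx.P_sum_one
  -- the extended solution
  set y : ℝ → ℝ := fun s => x (max s 0) with hy_def
  have hy01 : ∀ s, y s ∈ Set.Icc (0:ℝ) 1 := fun s => hx01 _ (le_max_right _ _)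
  have hyanti : Antitone y := fun a b hab =>
    hxanti (Set.mem_Ici.mpr (le_max_right _ _)) (Set.mem_Ici.mpr (le_max_right _ _)) (max_le_max hab le_rfl)
  have hψy_anti : Antitone (fun s => genFun P (y s)) := fun a b hab =>
    genFun_mono hP hsum (hy01 b).1 (hyanti hab) (hy01 a).2
  set G : ℝ → ℝ := fun s => genFun P (y s) * Real.exp (-s) with hG_def
  have hGmeas : Measurable G :=
    hψy_anti.measurable.mul (Real.continuous_exp.measurable.comp measurable_neg)
  have hψy01 : ∀ s, genFun P (y s) ∈ Set.Icc (0:ℝ) 1 := fun s =>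
    genFun_mem hP hsum hone (hy01 s)
  have hGnonneg : ∀ s, 0 ≤ G s := fun s =>
    mul_nonneg (hψy01 s).1 (Real.exp_pos _).le
  have hGle : ∀ s, G s ≤ Real.exp (-s) := fun s => by
    calc G s ≤ 1 * Real.exp (-s) :=
          mul_le_mul_of_nonneg_right (hψy01 s).2 (Real.exp_pos _).le
      _ = Real.exp (-s) := one_mul _
  have hGint : ∀ u : ℝ, IntegrableOn G (Set.Ioi u) := by
    intro u
    have hexp : IntegrableOn (fun s : ℝ => Real.exp (-s)) (Set.Ioi u) := by
      simpa [neg_one_mul] using exp_neg_integrableOn_Ioi u one_pos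
    refine hexp.mono' hGmeas.aestronglyMeasurable (ae_of_all _ fun s => ?_)
    rw [Real.norm_eq_abs, abs_of_nonneg (hGnonneg s)]
    exact hGle s
  set F : ℝ → ℝ := fun u => ∫ s in Set.Ioi u, G s with hF_def
  have hGii : ∀ a b : ℝ, IntervalIntegrable G volume a b := by
    intro a b
    rw [intervalIntegrable_iff]
    refine ((hGint (min a b - 1)).mono_set ?_)
    refine (Set.Ioc_subset_Ioi_self).trans (Set.Ioi_subset_Ioi ?_)
    simp [le_min_iff, min_le_left, min_le_right]
  have hFsplit : ∀ a b : ℝ, a ≤ b → F a = (∫ s in Set.Ioc a b, G s) + F b := by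
    intro a b hab
    rw [hF_def]
    simp only
    rw [← Set.Ioc_union_Ioi_eq_Ioi hab,
      setIntegral_union (Set.Ioc_disjoint_Ioi le_rfl) measurableSet_Ioi
        ((hGint a).mono_set Set.Ioc_subset_Ioi_self) (hGint b)]
  have hFsub : ∀ u : ℝ, F u = F 0 - ∫ s in (0:ℝ)..u, G s := by
    intro u
    rcases le_total 0 u with h | h
    · rw [intervalIntegral.integral_of_le h]
      have := hFsplit 0 u h
      linarith
    · rw [intervalIntegral.integral_symm u 0, intervalIntegral.integral_of_le h]
      have := hFsplit u 0 h
      linarith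
  have hFcont : Continuous F := by
    have hFe : F = fun u => F 0 - ∫ s in (0:ℝ)..u, G s := funext hFsub
    rw [hFe]
    exact continuous_const.sub (intervalIntegral.continuous_primitive hGii 0)
  set X : ℝ → ℝ := fun t => Real.exp (-(lam * t)) + lam * Real.exp (-(lam * t)) *
      ∫ u in (0:ℝ)..t, Real.exp ((lam + 1) * u) * F u with hX_def
  have hXeqx : Set.EqOn x X (Set.Ici 0) := by
    intro t ht
    rw [hxeq t ht, hX_def]
    simp only
    congr 2
    refine intervalIntegral.integral_congr fun u hu => ?_
    rw [Set.uIcc_of_le ht] at hu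
    congr 1
    refine setIntegral_congr_fun measurableSet_Ioi fun s hs => ?_
    have hs0 : (0:ℝ) ≤ s := hu.1.trans (le_of_lt hs)
    rw [hG_def]
    simp only [hy_def, max_eq_left hs0]
  set H : ℝ → ℝ := fun u => Real.exp ((lam + 1) * u) * F u with hH_def
  have hHcont : Continuous H :=
    (Real.continuous_exp.comp (continuous_const.mul continuous_id)).mul hFcont
  have hprim : ∀ t : ℝ, HasDerivAt (fun r => ∫ u in (0:ℝ)..r, H u) (H t) t := fun t =>
    intervalIntegral.integral_hasDerivAt_right (hHcont.intervalIntegrable _ _)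
      (hHcont.stronglyMeasurable.stronglyMeasurableAtFilter) hHcont.continuousAt
  have hE : ∀ t : ℝ, HasDerivAt (fun t => Real.exp (-(lam * t)))
      (-lam * Real.exp (-(lam * t))) t := by
    intro t
    have h1 : HasDerivAt (fun t : ℝ => -(lam * t)) (-lam) t := by
      exact (((hasDerivAt_id t).const_mul lam).neg).congr_deriv (by ring)
    simpa [mul_comm] using h1.exp
  set X1 : ℝ → ℝ := fun t => -lam * X t + lam * Real.exp t * F t with hX1_def
  have hexpid : ∀ t : ℝ, Real.exp (-(lam * t)) * Real.exp ((lam + 1) * t) = Real.exp t := by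
    intro t
    rw [← Real.exp_add]
    ring_nf
  have hX' : ∀ t : ℝ, HasDerivAt X (X1 t) t := by
    intro t
    have h := (hE t).add (((hE t).mul (hprim t)).const_mul lam)
    have hXf : X = fun t => Real.exp (-(lam * t)) +
        lam * (Real.exp (-(lam * t)) * ∫ u in (0:ℝ)..t, H u) := by
      funext r; rw [hX_def, hH_def]; ring
    rw [hXf]
    convert h using 1
    · rfl
    · rfl
    · rfl
    have hid := hexpid t
    rw [hX1_def, hX_def, hH_def]
    simp only
    linear_combination (-(lam * F t)) * hid
  have hXdiff : Differentiable ℝ X := fun t => (hX' t).differentiableAt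
  have hXcont : Continuous X := hXdiff.continuous
  have hycont : Continuous y := by
    have hye : y = fun s => X (max s 0) := funext fun s => hXeqx (le_max_right s 0)
    rw [hye]
    exact hXcont.comp (continuous_id.max continuous_const)
  have hψycont : Continuous fun s => genFun P (y s) :=
    (genFun_contOn hP hsum).comp_continuous hycont hy01
  have hGcont : Continuous G := by
    rw [hG_def]
    exact hψycont.mul (Real.continuous_exp.comp continuous_neg)
  have hF' : ∀ u : ℝ, HasDerivAt F (-(G u)) u := by
    intro u
    have h1 : HasDerivAt (fun r => ∫ s in (0:ℝ)..r, G s) (G u) u :=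
      intervalIntegral.integral_hasDerivAt_right (hGii 0 u)
        (hGcont.stronglyMeasurable.stronglyMeasurableAtFilter) hGcont.continuousAt
    have hFe : F = fun u => F 0 - ∫ s in (0:ℝ)..u, G s := funext hFsub
    rw [hFe]
    exact ((hasDerivAt_const u (F 0)).sub h1).congr_deriv (by ring)
  set X2 : ℝ → ℝ := fun t => -lam * X1 t + (X1 t + lam * X t) - lam * genFun P (y t)
    with hX2_def
  have hX1' : ∀ t : ℝ, HasDerivAt X1 (X2 t) t := by
    intro t
    have hexp' : HasDerivAt Real.exp (Real.exp t) t := Real.hasDerivAt_exp t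
    have h := ((hX' t).const_mul (-lam)).add ((hexp'.mul (hF' t)).const_mul lam)
    have hX1f : X1 = fun t => -lam * X t + lam * (Real.exp t * F t) := by
      funext r; rw [hX1_def]; ring
    rw [hX1f]
    convert h using 1
    · rfl
    · rfl
    · rfl
    have hinv : Real.exp t * Real.exp (-t) = 1 := by
      rw [← Real.exp_add]; simp
    rw [hX2_def, hX1_def, hG_def]
    simp only
    linear_combination (lam * genFun P (y t)) * hinv
  have hX1diff : Differentiable ℝ X1 := fun t => (hX1' t).differentiableAt
  have hX2cont : Continuous X2 := by
    rw [hX2_def]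
    exact ((continuous_const.mul hX1diff.continuous).add
      (hX1diff.continuous.add (continuous_const.mul hXcont))).sub
      (continuous_const.mul hψycont)
  have hC2 : ContDiff ℝ 2 X := by
    have hdX : deriv X = X1 := funext fun t => (hX' t).deriv
    have hdX1 : deriv X1 = X2 := funext fun t => (hX1' t).deriv
    rw [show (2 : WithTop ℕ∞) = 1 + 1 from rfl, contDiff_succ_iff_deriv]
    refine ⟨hXdiff, by simp, ?_⟩
    rw [hdX, contDiff_one_iff_deriv, hdX1]
    exact ⟨hX1diff, hX2cont⟩
  have hderiv1 : ∀ t ∈ Set.Ici (0:ℝ), derivWithin x (Set.Ici 0) t = X1 t := by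
    intro t ht
    rw [derivWithin_congr hXeqx (hXeqx ht)]
    exact (hX' t).hasDerivWithinAt.derivWithin (uniqueDiffOn_Ici 0 t ht)
  constructor
  · exact hC2.contDiffOn.congr hXeqx
  · intro t ht
    have hd2 : derivWithin (derivWithin x (Set.Ici 0)) (Set.Ici 0) t = X2 t := by
      rw [derivWithin_congr hderiv1 (hderiv1 t ht)]
      exact (hX1' t).hasDerivWithinAt.derivWithin (uniqueDiffOn_Ici 0 t ht)
    have hyt : y t = x t := by rw [hy_def]; simp only [max_eq_left ht]
    rw [hd2, hderiv1 t ht, hX2_def]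
    simp only [hyt]
    rw [hXeqx ht]
    ring
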